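/- Let α > 0, c₀ = √(tanh(α)/α) > 0, and for integer p with |p| ≥ 2 let k(p) be the unique solution of ω_α(k) + ω_α(k+p) = −αc₀p, where ω_α(k) = sign(k)·√(αk·tanh(αk)). Then k(p)·(k(p)+p) > 0 and ω_α(k(p))·ω_α(k(p)+p) > 0. -/

import Mathlib

noncomputable def omegaA (α k : ℝ) : ℝ :=
  Real.sign k * Real.sqrt (α * k * Real.tanh (α * k))

private lemma tanh_pos' {x : ℝ} (hx : 0 < x) : 0 < Real.tanh x := by
  rw [Real.tanh_eq_sinh_div_cosh]
  exact div_pos (Real.sinh_pos_iff.2 hx) (Real.cosh_pos x)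

private lemma tanh_mono' {x y : ℝ} (h : x ≤ y) : Real.tanh x ≤ Real.tanh y := by
  rw [Real.tanh_eq_sinh_div_cosh, Real.tanh_eq_sinh_div_cosh,
    div_le_div_iff₀ (Real.cosh_pos x) (Real.cosh_pos y)]
  have h1 : Real.sinh (x - y) ≤ 0 := Real.sinh_nonpos_iff.2 (by linarith)
  have h2 := Real.sinh_sub x y
  nlinarith

private lemma tanh_add_lt {x y : ℝ} (hx : 0 < x) (hy : 0 < y) :
    Real.tanh (x + y) < Real.tanh x + Real.tanh y := by
  have cx := Real.cosh_pos x
  have cy := Real.cosh_pos y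
  have sx := Real.sinh_pos_iff.2 hx
  have sy := Real.sinh_pos_iff.2 hy
  rw [Real.tanh_eq_sinh_div_cosh, Real.tanh_eq_sinh_div_cosh, Real.tanh_eq_sinh_div_cosh,
    Real.sinh_add, Real.cosh_add]
  have h1 : (Real.sinh x * Real.cosh y + Real.cosh x * Real.sinh y) /
      (Real.cosh x * Real.cosh y + Real.sinh x * Real.sinh y) <
      (Real.sinh x * Real.cosh y + Real.cosh x * Real.sinh y) /
      (Real.cosh x * Real.cosh y) := by
    apply div_lt_div_of_pos_left
    · positivity
    · positivity
    · nlinarith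
  have h2 : (Real.sinh x * Real.cosh y + Real.cosh x * Real.sinh y) /
      (Real.cosh x * Real.cosh y) = Real.sinh x / Real.cosh x + Real.sinh y / Real.cosh y := by
    field_simp
  linarith [h1, h2.symm.le]

/-- `tanh (n α) < n tanh α` for `n ≥ 2`. -/
private lemma tanh_nat_lt {α : ℝ} (hα : 0 < α) :
    ∀ n : ℕ, Real.tanh (α * (n + 2)) < (n + 2) * Real.tanh α := by
  intro n
  induction n with
  | zero =>
    have := tanh_add_lt hα hα
    have h : α * ((0 : ℕ) + 2) = α + α := by push_cast; ring
    rw [h]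
    push_cast
    linarith
  | succ m ih =>
    have h : α * ((m + 1 : ℕ) + 2) = α * ((m : ℕ) + 2) + α := by push_cast; ring
    rw [h]
    have hpos : 0 < α * ((m : ℕ) + 2) := by positivity
    have := tanh_add_lt hpos hα
    push_cast
    push_cast at ih
    linarith

private lemma arg_even (α k : ℝ) : α * (-k) * Real.tanh (α * (-k)) = α * k * Real.tanh (α * k) := by
  rw [mul_neg, Real.tanh_neg]; ring

private lemma arg_pos {α k : ℝ} (hα : 0 < α) (hk : 0 < k) : 0 < α * k * Real.tanh (α * k) :=
  mul_pos (mul_pos hα hk) (tanh_pos' (mul_pos hα hk))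

private lemma omega_pos {α k : ℝ} (hα : 0 < α) (hk : 0 < k) : 0 < omegaA α k := by
  rw [omegaA, Real.sign_of_pos hk, one_mul]
  exact Real.sqrt_pos.2 (arg_pos hα hk)

private lemma omega_neg {α k : ℝ} (hα : 0 < α) (hk : k < 0) : omegaA α k < 0 := by
  rw [omegaA, Real.sign_of_neg hk, neg_one_mul, neg_lt_zero]
  refine Real.sqrt_pos.2 ?_
  rw [← arg_even]
  exact arg_pos hα (by linarith)

private lemma omega_nonneg {α k : ℝ} (hα : 0 < α) (hk : 0 ≤ k) : 0 ≤ omegaA α k := by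
  rcases hk.lt_or_eq with h | h
  · exact (omega_pos hα h).le
  · simp [omegaA, ← h, Real.sign_zero]

private lemma omega_nonpos {α k : ℝ} (hα : 0 < α) (hk : k ≤ 0) : omegaA α k ≤ 0 := by
  rcases hk.lt_or_eq with h | h
  · exact (omega_neg hα h).le
  · simp [omegaA, h, Real.sign_zero]

private lemma omega_eq_neg_sqrt {α k : ℝ} (hk : k < 0) :
    omegaA α k = -Real.sqrt (α * (-k) * Real.tanh (α * (-k))) := by
  rw [omegaA, Real.sign_of_neg hk, neg_one_mul, arg_even]

private lemma omega_eq_sqrt {α k : ℝ} (hk : 0 < k) :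
    omegaA α k = Real.sqrt (α * k * Real.tanh (α * k)) := by
  rw [omegaA, Real.sign_of_pos hk, one_mul]

/-- Key bound: for `0 < k ≤ b` with `tanh (α b) < b tanh α`,
`√(α k tanh (α k)) < α √(tanh α / α) · b`. -/
private lemma sqrt_bound {α k b : ℝ} (hα : 0 < α) (hk : 0 < k) (hkb : k ≤ b)
    (hb : Real.tanh (α * b) < b * Real.tanh α) :
    Real.sqrt (α * k * Real.tanh (α * k)) < α * Real.sqrt (Real.tanh α / α) * b := by
  have hb0 : 0 < b := lt_of_lt_of_le hk hkb
  have hta : 0 < Real.tanh α := tanh_pos' hα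
  have hrhs : 0 < α * Real.sqrt (Real.tanh α / α) * b := by
    have : 0 < Real.sqrt (Real.tanh α / α) := Real.sqrt_pos.2 (div_pos hta hα)
    positivity
  rw [show α * Real.sqrt (Real.tanh α / α) * b = Real.sqrt (α * Real.tanh α * b ^ 2) by
      rw [show α * Real.tanh α * b ^ 2 = (α * b) ^ 2 * (Real.tanh α / α) by
          field_simp,
        Real.sqrt_mul (by positivity), Real.sqrt_sq (mul_pos hα hb0).le]
      ring]
  apply Real.sqrt_lt_sqrt (arg_pos hα hk).le
  have hmono : Real.tanh (α * k) ≤ Real.tanh (α * b) :=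
    tanh_mono' (mul_le_mul_of_nonneg_left hkb hα.le)
  have htk : 0 < Real.tanh (α * k) := tanh_pos' (by positivity)
  nlinarith [mul_le_mul hkb hmono htk.le hb0.le, mul_lt_mul_of_pos_left hb hb0]

theorem collision_krein (α : ℝ) (hα : 0 < α) (K : ℝ → ℝ)
    (hK : ∀ p : ℝ, omegaA α (K p) + omegaA α (K p + p) =
      -(α * Real.sqrt (Real.tanh α / α) * p)) :
    ∀ p : ℤ, 2 ≤ |p| →
      0 < K (p : ℝ) * (K (p : ℝ) + (p : ℝ)) ∧
        0 < omegaA α (K (p : ℝ)) * omegaA α (K (p : ℝ) + (p : ℝ)) := by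
  intro p hp
  have hta : 0 < Real.tanh α := tanh_pos' hα
  have hc : 0 < Real.sqrt (Real.tanh α / α) := Real.sqrt_pos.2 (div_pos hta hα)
  set c : ℝ := Real.sqrt (Real.tanh α / α) with hc_def
  -- the strict subadditivity bound for |p|
  have habs : (2 : ℤ) ≤ |p| := hp
  have htanh_bound : Real.tanh (α * |(p : ℝ)|) < |(p : ℝ)| * Real.tanh α := by
    have hn : |p| = ((|p|.toNat : ℕ) : ℤ) := (Int.toNat_of_nonneg (abs_nonneg p)).symm
    obtain ⟨m, hm⟩ : ∃ m : ℕ, |p|.toNat = m + 2 := by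
      refine ⟨|p|.toNat - 2, ?_⟩
      omega
    have hcast : |(p : ℝ)| = ((m : ℝ) + 2) := by
      rw [← Int.cast_abs, hn, hm]
      push_cast
      ring
    rw [hcast]
    exact tanh_nat_lt hα m
  rcases le_abs.mp habs with hp2 | hp2
  · -- case p ≥ 2
    have hq : (2 : ℝ) ≤ (p : ℝ) := by exact_mod_cast hp2
    have hq0 : (0 : ℝ) < (p : ℝ) := by linarith
    have habsq : |(p : ℝ)| = (p : ℝ) := abs_of_pos hq0
    have heq := hK (p : ℝ)
    set k : ℝ := K (p : ℝ) with hk_def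
    have hrhs_neg : -(α * c * (p : ℝ)) < 0 := by
      have : 0 < α * c * (p : ℝ) := by positivity
      linarith
    -- k < 0
    have hk_neg : k < 0 := by
      by_contra h
      have h1 : 0 ≤ omegaA α k := omega_nonneg hα (not_lt.mp h)
      have h2 : 0 < omegaA α (k + (p : ℝ)) :=
        omega_pos hα (by linarith [not_lt.mp h])
      linarith [heq]
    -- k + p < 0
    have hkp_neg : k + (p : ℝ) < 0 := by
      by_contra h
      have hkp : 0 ≤ k + (p : ℝ) := not_lt.mp h
      have h1 : 0 ≤ omegaA α (k + (p : ℝ)) := omega_nonneg hα hkp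
      have h2 : omegaA α k = -Real.sqrt (α * (-k) * Real.tanh (α * (-k))) :=
        omega_eq_neg_sqrt hk_neg
      have hbound : Real.sqrt (α * (-k) * Real.tanh (α * (-k))) < α * c * (p : ℝ) := by
        apply sqrt_bound hα (by linarith) (by linarith)
        rwa [habsq] at htanh_bound
      have : omegaA α k + omegaA α (k + (p : ℝ)) > -(α * c * (p : ℝ)) := by
        rw [h2]; linarith
      linarith [heq]
    exact ⟨mul_pos_of_neg_of_neg hk_neg hkp_neg,
      mul_pos_of_neg_of_neg (omega_neg hα hk_neg) (omega_neg hα hkp_neg)⟩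
  · -- case p ≤ -2
    have hq : (p : ℝ) ≤ -2 := by
      have : (2 : ℝ) ≤ (-p : ℤ) := by exact_mod_cast hp2
      push_cast at this
      linarith
    have hq0 : (p : ℝ) < 0 := by linarith
    have habsq : |(p : ℝ)| = -(p : ℝ) := abs_of_neg hq0
    have heq := hK (p : ℝ)
    set k : ℝ := K (p : ℝ) with hk_def
    have hrhs_pos : 0 < -(α * c * (p : ℝ)) := by
      have : α * c * (p : ℝ) < 0 := mul_neg_of_pos_of_neg (by positivity) hq0
      linarith
    -- k > 0
    have hk_pos : 0 < k := by
      by_contra h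
      have hk0 : k ≤ 0 := not_lt.mp h
      have h1 : omegaA α k ≤ 0 := omega_nonpos hα hk0
      have h2 : omegaA α (k + (p : ℝ)) < 0 := omega_neg hα (by linarith)
      linarith [heq]
    -- k + p > 0
    have hkp_pos : 0 < k + (p : ℝ) := by
      by_contra h
      have hkp : k + (p : ℝ) ≤ 0 := not_lt.mp h
      have h1 : omegaA α (k + (p : ℝ)) ≤ 0 := omega_nonpos hα hkp
      have h2 : omegaA α k = Real.sqrt (α * k * Real.tanh (α * k)) := omega_eq_sqrt hk_pos
      have hbound : Real.sqrt (α * k * Real.tanh (α * k)) < α * c * (-(p : ℝ)) := by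
        apply sqrt_bound hα hk_pos (by linarith)
        rwa [habsq] at htanh_bound
      have : omegaA α k + omegaA α (k + (p : ℝ)) < -(α * c * (p : ℝ)) := by
        rw [h2]; linarith
      linarith [heq]
    exact ⟨mul_pos hk_pos hkp_pos,
      mul_pos (omega_pos hα hk_pos) (omega_pos hα hkp_pos)⟩
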